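/- Let X be a complex Banach space which is M-embedded. Then every separable closed subspace Y of X has a separable dual space Y*. -/

import Mathlib

open NormedSpace

noncomputable section

set_option maxHeartbeats 1000000

instance strongDualSeminormedAddCommGroup {E : Type*} [SeminormedAddCommGroup E]
    [NormedSpace ℂ E] : SeminormedAddCommGroup (StrongDual ℂ E) :=
  ContinuousLinearMap.toSeminormedAddCommGroup

instance strongDualNormedSpace {E : Type*} [SeminormedAddCommGroup E] [NormedSpace ℂ E] :
    NormedSpace ℂ (StrongDual ℂ E) :=
  ContinuousLinearMap.toNormedSpace

/-- The transpose (dual map) of a continuous linear map between (semi)normed spaces: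
`ctranspose f` sends a functional `g` to `g ∘ f`. -/
def ctranspose {E F : Type*} [SeminormedAddCommGroup E] [NormedSpace ℂ E]
    [SeminormedAddCommGroup F] [NormedSpace ℂ F] (f : E →L[ℂ] F) :
    StrongDual ℂ F →L[ℂ] StrongDual ℂ E :=
  (ContinuousLinearMap.compL ℂ E F ℂ).flip f

/-- A bounded linear projection `P` is an L-projection if `‖z‖ = ‖P z‖ + ‖z - P z‖`
for all `z`. -/
def IsLProjection {Z : Type*} [SeminormedAddCommGroup Z] [NormedSpace ℂ Z]
    (P : Z →L[ℂ] Z) : Prop :=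
  (∀ z, P (P z) = P z) ∧ ∀ z, ‖z‖ = ‖P z‖ + ‖z - P z‖

/-- A complex Banach space `X` is M-embedded if the annihilator `i_X(X)^⊥` is an
L-summand in `X***`. -/
def MEmbedded (X : Type*) [SeminormedAddCommGroup X] [NormedSpace ℂ X] : Prop :=
  ∃ P : StrongDual ℂ (StrongDual ℂ (StrongDual ℂ X)) →L[ℂ] StrongDual ℂ (StrongDual ℂ (StrongDual ℂ X)),
    IsLProjection (Z := StrongDual ℂ (StrongDual ℂ (StrongDual ℂ X))) P ∧
    Set.range P = {φ : StrongDual ℂ (StrongDual ℂ (StrongDual ℂ X)) |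
      ∀ x : X, φ (inclusionInDoubleDual ℂ X x) = 0}

section Aux

variable {X : Type*} [NormedAddCommGroup X] [NormedSpace ℂ X]

lemma iXd_comp_iX (g : StrongDual ℂ X) :
    (inclusionInDoubleDual ℂ (StrongDual ℂ X) g).comp (inclusionInDoubleDual ℂ X) = g := by
  ext x
  simp [NormedSpace.dual_def]

lemma norm_iXd (g : StrongDual ℂ X) : ‖inclusionInDoubleDual ℂ (StrongDual ℂ X) g‖ = ‖g‖ :=
  (NormedSpace.inclusionInDoubleDualLi ℂ (E := StrongDual ℂ X)).norm_map g

lemma norm_comp_iX_le (φ : StrongDual ℂ (StrongDual ℂ (StrongDual ℂ X))) :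
    ‖φ.comp (inclusionInDoubleDual ℂ X)‖ ≤ ‖φ‖ := by
  calc ‖φ.comp (inclusionInDoubleDual ℂ X)‖ ≤ ‖φ‖ * ‖inclusionInDoubleDual ℂ X‖ :=
        ContinuousLinearMap.opNorm_comp_le _ _
    _ ≤ ‖φ‖ * 1 := by
        gcongr; exact inclusionInDoubleDual_norm_le ℂ X
    _ = ‖φ‖ := mul_one _

lemma ctranspose_apply {E F : Type*} [SeminormedAddCommGroup E] [NormedSpace ℂ E]
    [SeminormedAddCommGroup F] [NormedSpace ℂ F] (f : E →L[ℂ] F) (g : StrongDual ℂ F) :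
    ctranspose f g = g.comp f := by
  simp [ctranspose, ContinuousLinearMap.flip_apply, ContinuousLinearMap.compL_apply]

lemma clm_eq_of_norm_sub_le_zero {E : Type*} [SeminormedAddCommGroup E] [NormedSpace ℂ E]
    {f g : E →L[ℂ] ℂ} (h : ‖f - g‖ ≤ 0) : f = g := by
  ext x
  have hle : ‖(f - g) x‖ ≤ ‖f - g‖ * ‖x‖ := (f - g).le_opNorm x
  have hx : ‖f - g‖ * ‖x‖ ≤ 0 := mul_nonpos_of_nonpos_of_nonneg h (norm_nonneg x)
  have : ‖f x - g x‖ ≤ 0 := by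
    simpa [ContinuousLinearMap.sub_apply] using hle.trans hx
  exact sub_eq_zero.mp (norm_le_zero_iff.mp this)

/-- The key L-decomposition identity for M-embedded spaces. -/
lemma MEmbedded.norm_eq (hX : MEmbedded X) (φ : StrongDual ℂ (StrongDual ℂ (StrongDual ℂ X))) :
    ‖φ‖ = ‖φ.comp (inclusionInDoubleDual ℂ X)‖ +
      ‖φ - inclusionInDoubleDual ℂ (StrongDual ℂ X) (φ.comp (inclusionInDoubleDual ℂ X))‖ := by
  obtain ⟨P, ⟨Pidem, PL⟩, Prange⟩ := hX
  have hmem : ∀ ψ : StrongDual ℂ (StrongDual ℂ (StrongDual ℂ X)),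
      ψ ∈ Set.range P ↔ ψ.comp (inclusionInDoubleDual ℂ X) = 0 := by
    intro ψ
    rw [Prange]
    constructor
    · intro h; ext x; exact h x
    · intro h x; exact DFunLike.congr_fun h x
  set v := φ - P φ with hv
  have hPv : P v = 0 := by rw [hv, ContinuousLinearMap.map_sub (M := StrongDual ℂ (StrongDual ℂ (StrongDual ℂ X))) (M₂ := StrongDual ℂ (StrongDual ℂ (StrongDual ℂ X))) P, Pidem, sub_self]
  set j := v - inclusionInDoubleDual ℂ (StrongDual ℂ X) (v.comp (inclusionInDoubleDual ℂ X)) with hj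
  have hjrange : j ∈ Set.range P := by
    rw [hmem]
    simp [hj, ContinuousLinearMap.sub_comp, iXd_comp_iX]
  have hPj : P j = j := by
    obtain ⟨w, hw⟩ := hjrange
    rw [← hw, Pidem]
  have hL := PL (v - j)
  have h1 : P (v - j) = -j := by rw [ContinuousLinearMap.map_sub (M := StrongDual ℂ (StrongDual ℂ (StrongDual ℂ X))) (M₂ := StrongDual ℂ (StrongDual ℂ (StrongDual ℂ X))) P, hPv, hPj]; exact zero_sub j
  rw [h1] at hL
  have h2 : v - j - -j = v := by abel
  rw [h2, ContinuousLinearMap.opNorm_neg] at hL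
  have h3 : ‖v - j‖ = ‖v.comp (inclusionInDoubleDual ℂ X)‖ := by
    have : v - j = inclusionInDoubleDual ℂ (StrongDual ℂ X) (v.comp (inclusionInDoubleDual ℂ X)) := by
      rw [hj]; abel
    rw [this, norm_iXd]
  have h4 : ‖j‖ = 0 := by
    have := norm_comp_iX_le (X := X) v
    rw [← h3, hL] at this
    have h0 := norm_nonneg j
    linarith
  have hj0 : j = 0 := by
    ext F
    have hle : ‖j F‖ ≤ ‖j‖ * ‖F‖ := j.le_opNorm F
    rw [h4, zero_mul] at hle
    simpa using norm_le_zero_iff.mp hle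
  have hveq : v = inclusionInDoubleDual ℂ (StrongDual ℂ X) (v.comp (inclusionInDoubleDual ℂ X)) := by
    have := hj0
    rw [hj] at this
    exact sub_eq_zero.mp this
  have hPφrange : (P φ).comp (inclusionInDoubleDual ℂ X) = 0 :=
    (hmem (P φ)).mp ⟨φ, rfl⟩
  have hcomp : φ.comp (inclusionInDoubleDual ℂ X) = v.comp (inclusionInDoubleDual ℂ X) := by
    rw [hv, ContinuousLinearMap.sub_comp, hPφrange, sub_zero]
  have hPφ : P φ = φ - inclusionInDoubleDual ℂ (StrongDual ℂ X) (φ.comp (inclusionInDoubleDual ℂ X)) := by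
    rw [hcomp, ← hveq, hv]; abel
  have := PL φ
  rw [hPφ] at this
  have h5 : φ - (φ - inclusionInDoubleDual ℂ (StrongDual ℂ X) (φ.comp (inclusionInDoubleDual ℂ X)))
      = inclusionInDoubleDual ℂ (StrongDual ℂ X) (φ.comp (inclusionInDoubleDual ℂ X)) := by abel
  rw [h5, norm_iXd] at this
  linarith

/-- Cluster value of a convergent sequence is the limit. -/
lemma clusterPt_eq_limit {α : Type*} [TopologicalSpace α] [T2Space α] {u : ℕ → α} {a b : α}
    (h : MapClusterPt a Filter.atTop u) (h2 : Filter.Tendsto u Filter.atTop (nhds b)) : a = b := by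
  have : ClusterPt a (nhds b) := h.clusterPt.mono h2
  exact eq_of_nhds_neBot this

lemma clusterPt_le_of_le {u : ℕ → ℝ} {a s : ℝ}
    (h : MapClusterPt a Filter.atTop u) (hu : ∀ n, u n ≤ s) : a ≤ s := by
  have hmem : Set.Iic s ∈ Filter.map u Filter.atTop :=
    Filter.eventually_atTop.2 ⟨0, fun n _ => hu n⟩
  have : ClusterPt a (Filter.principal (Set.Iic s)) :=
    h.clusterPt.mono (Filter.le_principal_iff.2 hmem)
  have := mem_closure_iff_clusterPt.2 this
  rwa [isClosed_Iic.closure_eq] at this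

end Aux

section Main

variable {X : Type*} [NormedAddCommGroup X] [NormedSpace ℂ X]

/-- A countable norm-one-ball subset of the dual approximating traces on a dense sequence. -/
lemma exists_countable_approx (Y : Subspace ℂ X) (y : ℕ → Y) :
    ∃ D : Set (StrongDual ℂ Y), D.Countable ∧ (∀ d ∈ D, ‖d‖ ≤ 1) ∧
      ∀ g : StrongDual ℂ Y, ‖g‖ ≤ 1 → ∀ m : ℕ, ∃ d ∈ D, ∀ k : ℕ, k < m →
        dist (d (y k)) (g (y k)) < 1 / (m + 1) := by
  have H : ∀ m : ℕ, ∃ Dm : Set (StrongDual ℂ Y), Dm.Countable ∧ (∀ d ∈ Dm, ‖d‖ ≤ 1) ∧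
      ∀ g : StrongDual ℂ Y, ‖g‖ ≤ 1 → ∃ d ∈ Dm, ∀ k : ℕ, k < m →
        dist (d (y k)) (g (y k)) < 1 / (m + 1) := by
    intro m
    set τ : StrongDual ℂ Y → (Fin m → ℂ) := fun g k => g (y k) with hτ
    set T : Set (Fin m → ℂ) := τ '' {g : StrongDual ℂ Y | ‖g‖ ≤ 1} with hT
    obtain ⟨t, htT, htc, hTt⟩ :=
      (TopologicalSpace.IsSeparable.of_separableSpace T).exists_countable_dense_subset
    have hpre : ∀ q ∈ t, ∃ d : StrongDual ℂ Y, ‖d‖ ≤ 1 ∧ τ d = q := by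
      intro q hq
      obtain ⟨d, hd, hdq⟩ := htT hq
      exact ⟨d, hd, hdq⟩
    choose! f hf1 hf2 using hpre
    refine ⟨f '' t, htc.image f, ?_, ?_⟩
    · rintro d ⟨q, hq, rfl⟩
      exact hf1 q hq
    · intro g hg
      have hgT : τ g ∈ T := ⟨g, hg, rfl⟩
      have hεpos : (0 : ℝ) < 1 / (m + 1) := by positivity
      obtain ⟨q, hqt, hqd⟩ := Metric.mem_closure_iff.1 (hTt hgT) (1 / (m + 1)) hεpos
      refine ⟨f q, ⟨q, hqt, rfl⟩, ?_⟩
      intro k hk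
      have : dist (τ (f q) ⟨k, hk⟩) (τ g ⟨k, hk⟩) ≤ dist (τ (f q)) (τ g) :=
        dist_le_pi_dist _ _ _
    -- dist (τ g) q = dist q (τ g) symmetry
      have h2 : dist (τ (f q)) (τ g) < 1 / (m + 1) := by
        rw [hf2 q hqt]
        rw [dist_comm]
        exact hqd
      calc dist (f q (y k)) (g (y k)) = dist (τ (f q) ⟨k, hk⟩) (τ g ⟨k, hk⟩) := rfl
        _ ≤ dist (τ (f q)) (τ g) := dist_le_pi_dist _ _ _
        _ < 1 / (m + 1) := h2
  choose Dm hDmc hDmb hDma using H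
  refine ⟨⋃ m, Dm m, Set.countable_iUnion hDmc, ?_, ?_⟩
  · rintro d hd
    obtain ⟨m, hm⟩ := Set.mem_iUnion.1 hd
    exact hDmb m d hm
  · intro g hg m
    obtain ⟨d, hd, hda⟩ := hDma m g hg
    exact ⟨d, Set.mem_iUnion.2 ⟨m, hd⟩, hda⟩

end Main

/-- Every separable closed subspace of an M-embedded complex Banach space has a
separable dual. -/
theorem MEmbedded.separable_subspace_separable_dual
    (X : Type*) [NormedAddCommGroup X] [NormedSpace ℂ X] [CompleteSpace X]
    (hX : MEmbedded X) (Y : Subspace ℂ X) (hY : IsClosed (Y : Set X))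
    (hsep : TopologicalSpace.SeparableSpace Y) :
    TopologicalSpace.SeparableSpace (StrongDual ℂ Y) := by
  classical
  have : Nonempty Y := ⟨0⟩
  obtain ⟨y, hy⟩ := TopologicalSpace.exists_dense_seq Y
  obtain ⟨D, hDc, hDb, hDa⟩ := exists_countable_approx Y y
  set M : Submodule ℂ (StrongDual ℂ Y) := (Submodule.span ℂ D).topologicalClosure with hM
  -- core claim: every norm-one functional is in M
  have core : ∀ g : StrongDual ℂ Y, ‖g‖ = 1 → g ∈ M := by
    intro g hg1
    by_contra hg
    -- separation
    have hMconv : Convex ℝ (M : Set (StrongDual ℂ Y)) := (Submodule.restrictScalars ℝ M).convex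
    have hMclosed : IsClosed (M : Set (StrongDual ℂ Y)) := Submodule.isClosed_topologicalClosure _
    obtain ⟨F, u, hFs, hFg⟩ :=
      RCLike.geometric_hahn_banach_closed_point (𝕜 := ℂ) hMconv hMclosed hg
    -- approximating sequence from D
    have hgle : ‖g‖ ≤ 1 := le_of_eq hg1
    choose d hdD hdapp using fun m => hDa g hgle m
    have hdb : ∀ m, ‖d m‖ ≤ 1 := fun m => hDb _ (hdD m)
    -- pointwise convergence on the dense sequence
    have hconv : ∀ k : ℕ, Filter.Tendsto (fun m => d m (y k)) Filter.atTop (nhds (g (y k))) := by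
      intro k
      rw [Metric.tendsto_atTop]
      intro ε hε
      obtain ⟨n, hn⟩ := exists_nat_one_div_lt hε
      refine ⟨max (k + 1) n, fun m hm => ?_⟩
      have hkm : k < m := lt_of_lt_of_le (Nat.lt_succ_self k) (le_trans (le_max_left _ _) hm)
      have h1 : dist (d m (y k)) (g (y k)) < 1 / (m + 1) := hdapp m k hkm
      have h2 : (1 : ℝ) / (m + 1) ≤ 1 / (n + 1) := by
        apply one_div_le_one_div_of_le
        · positivity
        · have : (n : ℝ) ≤ m := by exact_mod_cast le_trans (le_max_right _ _) hm
          linarith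
      exact lt_of_lt_of_le h1 (le_trans h2 (le_of_lt hn))
    -- Hahn-Banach extensions
    choose G hGext hGnorm using fun m => exists_extension_norm_eq Y (d m)
    have hGb : ∀ m, ‖G m‖ ≤ 1 := fun m => by rw [hGnorm m]; exact hdb m
    -- cluster point in the weak-star topology of X***
    set Φ : ℕ → WeakDual ℂ (StrongDual ℂ (StrongDual ℂ X)) :=
      fun m => StrongDual.toWeakDual (inclusionInDoubleDual ℂ (StrongDual ℂ X) (G m)) with hΦ
    have hΦball : ∀ m, Φ m ∈ WeakDual.toStrongDual ⁻¹' Metric.closedBall 0 1 := by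
      intro m
      simp only [Set.mem_preimage, mem_closedBall_zero_iff]
      rw [mem_closedBall_zero_iff (E := StrongDual ℂ (StrongDual ℂ (StrongDual ℂ X)))]
      show ‖inclusionInDoubleDual ℂ (StrongDual ℂ X) (G m)‖ ≤ 1
      rw [norm_iXd]
      exact hGb m
    have hcpt := WeakDual.isCompact_closedBall (𝕜 := ℂ) (E := StrongDual ℂ (StrongDual ℂ X)) 0 1
    have hmaple : Filter.map Φ Filter.atTop ≤
        Filter.principal (WeakDual.toStrongDual ⁻¹' Metric.closedBall 0 1) :=
      Filter.le_principal_iff.2 (Filter.eventually_atTop.2 ⟨0, fun m _ => hΦball m⟩)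
    obtain ⟨φ, hφball, hφcl⟩ := hcpt.exists_mapClusterPt (u := Φ) hmaple
    -- φ as an element of the normed triple dual
    set φ' : StrongDual ℂ (StrongDual ℂ (StrongDual ℂ X)) := WeakDual.toStrongDual φ with hφ'
    have hφnorm : ‖φ'‖ ≤ 1 := by
      have := hφball
      simpa [Set.mem_preimage, mem_closedBall_zero_iff] using this
    -- evaluation cluster values
    have hev : ∀ F' : StrongDual ℂ (StrongDual ℂ X), MapClusterPt (φ F') Filter.atTop (fun m => Φ m F') := by
      intro F'
      have hcont : Continuous fun ψ : WeakDual ℂ (StrongDual ℂ (StrongDual ℂ X)) => ψ F' :=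
        WeakDual.eval_continuous F'
      exact hφcl.continuousAt_comp hcont.continuousAt
    -- (β) : φ' ∘ i_X agrees with g on Y
    have hβ : ∀ k : ℕ, φ' (inclusionInDoubleDual ℂ X ((y k : Y) : X)) = g (y k) := by
      intro k
      have h1 : ∀ m, Φ m (inclusionInDoubleDual ℂ X ((y k : Y) : X)) = d m (y k) := by
        intro m
        show inclusionInDoubleDual ℂ (StrongDual ℂ X) (G m) (inclusionInDoubleDual ℂ X ((y k : Y) : X)) = _
        rw [NormedSpace.dual_def, NormedSpace.dual_def]
        exact hGext m (y k)
      have := hev (inclusionInDoubleDual ℂ X ((y k : Y) : X))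
      rw [show (fun m => Φ m (inclusionInDoubleDual ℂ X ((y k : Y) : X))) = fun m => d m (y k) from
        funext h1] at this
      exact clusterPt_eq_limit this (hconv k)
    -- the restriction of φ' ∘ i_X to Y is g
    have hρ : ((φ'.comp (inclusionInDoubleDual ℂ X)).comp Y.subtypeL) = g := by
      have heq : (fun z : Y => φ' (inclusionInDoubleDual ℂ X (z : X))) = fun z : Y => g z := by
        apply Continuous.ext_on (s := Set.range y) hy
        · exact ((φ'.comp (inclusionInDoubleDual ℂ X)).comp Y.subtypeL).continuous
        · exact g.continuous
        · rintro _ ⟨k, rfl⟩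
          exact hβ k
      ext z
      exact congrFun heq z
    -- norm bounds force φ' to be in the image of X*
    have hπnorm : (1 : ℝ) ≤ ‖φ'.comp (inclusionInDoubleDual ℂ X)‖ := by
      have : ‖g‖ ≤ ‖φ'.comp (inclusionInDoubleDual ℂ X)‖ * ‖Y.subtypeL‖ := by
        rw [← hρ]
        exact ContinuousLinearMap.opNorm_comp_le _ _
      have h2 : ‖φ'.comp (inclusionInDoubleDual ℂ X)‖ * ‖Y.subtypeL‖ ≤
          ‖φ'.comp (inclusionInDoubleDual ℂ X)‖ * 1 :=
        mul_le_mul_of_nonneg_left (Submodule.norm_subtypeL_le Y) (norm_nonneg _)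
      rw [hg1] at this
      linarith [this, h2]
    have hkey := hX.norm_eq φ'
    have hzero : φ' = inclusionInDoubleDual ℂ (StrongDual ℂ X) (φ'.comp (inclusionInDoubleDual ℂ X)) := by
      have h0 : ‖φ' - inclusionInDoubleDual ℂ (StrongDual ℂ X) (φ'.comp (inclusionInDoubleDual ℂ X))‖ ≤ 0 := by
        linarith
      exact clm_eq_of_norm_sub_le_zero h0
    -- the contradiction functional
    set E : StrongDual ℂ (StrongDual ℂ X) := F.comp (ctranspose Y.subtypeL) with hE
    have hvalE : ∀ m, Φ m E = F (d m) := by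
      intro m
      show inclusionInDoubleDual ℂ (StrongDual ℂ X) (G m) E = F (d m)
      rw [NormedSpace.dual_def, hE, ContinuousLinearMap.comp_apply, ctranspose_apply]
      congr 1
      ext z
      exact hGext m z
    have hγ : RCLike.re (φ E) ≤ u := by
      have h1 : MapClusterPt (φ E) Filter.atTop (fun m => Φ m E) := hev E
      rw [show (fun m => Φ m E) = fun m => F (d m) from funext hvalE] at h1
      have h2 : MapClusterPt (RCLike.re (φ E)) Filter.atTop (fun m => RCLike.re (F (d m))) := by
        have hcont : Continuous (RCLike.re (K := ℂ)) := RCLike.continuous_re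
        exact h1.continuousAt_comp hcont.continuousAt
      apply clusterPt_le_of_le h2
      intro m
      have hdM : d m ∈ M := Submodule.le_topologicalClosure _ (Submodule.subset_span (hdD m))
      exact le_of_lt (hFs _ hdM)
    have hε' : φ E = F g := by
      show φ' E = F g
      rw [hzero, NormedSpace.dual_def, hE, ContinuousLinearMap.comp_apply, ctranspose_apply, hρ]
    rw [hε'] at hγ
    linarith
  -- conclude : M is everything
  have hall : ∀ g : StrongDual ℂ Y, g ∈ M := by
    intro g
    rcases eq_or_ne g 0 with rfl | hg0
    · exact M.zero_mem
    · have hn : ‖g‖ ≠ 0 := (norm_ne_zero_iff (E := StrongDual ℂ Y)).2 hg0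
      have : (‖g‖⁻¹ : ℂ) • g ∈ M := by
        apply core
        rw [@norm_smul ℂ (StrongDual ℂ Y) _ _ _ (@NormedSpace.toNormSMulClass ℂ (StrongDual ℂ Y) _ strongDualSeminormedAddCommGroup strongDualNormedSpace)]
        simp [norm_inv, hn]
        rw [abs_of_nonneg (norm_nonneg g)]
        exact inv_mul_cancel₀ hn
      have := M.smul_mem (‖g‖ : ℂ) this
      rwa [smul_smul, mul_inv_cancel₀ (by exact_mod_cast hn), one_smul] at this
  -- separability
  have hsepM : TopologicalSpace.IsSeparable (Set.univ : Set (StrongDual ℂ Y)) := by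
    have h1 : TopologicalSpace.IsSeparable ((Submodule.span ℂ D : Submodule ℂ (StrongDual ℂ Y)) : Set (StrongDual ℂ Y)) :=
      hDc.isSeparable.span
    have h2 := h1.closure
    have h3 : (Set.univ : Set (StrongDual ℂ Y)) ⊆ closure ((Submodule.span ℂ D : Submodule ℂ (StrongDual ℂ Y)) : Set (StrongDual ℂ Y)) := by
      intro g _
      have := hall g
      rwa [hM, ← Submodule.topologicalClosure_coe] at *
    exact h2.mono h3
  exact TopologicalSpace.isSeparable_univ_iff.mp hsepM
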